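/- If a lower-triangular matrix A ∈ F^{n×n} over a field F is totally-non-singular, then A is invertible and its inverse A^{-1} (which is again lower-triangular) is also totally-non-singular. -/

import Mathlib

/-- A lower-triangular matrix is *totally non-singular* if every square submatrix
`A[I|J]` with row indices `I = {i₁ < ⋯ < i_r}` and column indices `J = {j₁ < ⋯ < j_r}`
satisfying `i_s ≥ j_s` for all `s` is non-singular. -/
def TotallyNonSingular {F : Type*} [Field F] {n : ℕ} (A : Matrix (Fin n) (Fin n) F) : Prop :=
  ∀ (r : ℕ) (I J : Fin r → Fin n), StrictMono I → StrictMono J →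
    (∀ s : Fin r, J s ≤ I s) → (A.submatrix I J).det ≠ 0

open Finset

namespace TNSAux

variable {n : ℕ}

/-- The strictly monotone enumeration of the complement of the range of `f`. -/
lemma compl_card {r : ℕ} (f : Fin r → Fin n) (hf : Function.Injective f) :
    ((Finset.univ.image f)ᶜ).card = n - r := by
  simp [Finset.card_compl, Finset.card_image_of_injective _ hf]

noncomputable def compl {r : ℕ} (f : Fin r → Fin n) (hf : Function.Injective f) :
    Fin (n - r) → Fin n :=
  ((Finset.univ.image f)ᶜ).orderEmbOfFin (compl_card f hf)

lemma compl_strictMono {r : ℕ} (f : Fin r → Fin n) (hf : Function.Injective f) :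
    StrictMono (compl f hf) :=
  (((Finset.univ.image f)ᶜ).orderEmbOfFin (compl_card f hf)).strictMono

lemma compl_not_mem {r : ℕ} (f : Fin r → Fin n) (hf : Function.Injective f) (t : Fin (n - r)) :
    compl f hf t ∉ Finset.univ.image f := by
  have := Finset.orderEmbOfFin_mem ((Finset.univ.image f)ᶜ) (compl_card f hf) t
  rw [Finset.mem_compl] at this
  exact this

lemma compl_ne {r : ℕ} (f : Fin r → Fin n) (hf : Function.Injective f) (s : Fin r)
    (t : Fin (n - r)) : f s ≠ compl f hf t := by
  intro h
  exact compl_not_mem f hf t (h ▸ Finset.mem_image_of_mem f (Finset.mem_univ s))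

lemma elim_bijective {r : ℕ} (f : Fin r → Fin n) (hf : Function.Injective f) :
    Function.Bijective (Sum.elim f (compl f hf)) := by
  have hr : r ≤ n := by
    simpa using Fintype.card_le_of_injective f hf
  rw [Fintype.bijective_iff_injective_and_card]
  constructor
  · rintro (a | a) (b | b) h <;> simp only [Sum.elim_inl, Sum.elim_inr] at h
    · exact congrArg Sum.inl (hf h)
    · exact absurd h (compl_ne f hf a b)
    · exact absurd h.symm (compl_ne f hf b a)
    · exact congrArg Sum.inr ((compl_strictMono f hf).injective h)
  · simp [Fintype.card_sum]; omega

/-- The equivalence `Fin r ⊕ Fin (n-r) ≃ Fin n` given by `f` and its complement. -/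
noncomputable def splitEquiv {r : ℕ} (f : Fin r → Fin n) (hf : Function.Injective f) :
    Fin r ⊕ Fin (n - r) ≃ Fin n :=
  Equiv.ofBijective _ (elim_bijective f hf)

@[simp] lemma splitEquiv_inl {r : ℕ} (f : Fin r → Fin n) (hf : Function.Injective f) (s : Fin r) :
    splitEquiv f hf (Sum.inl s) = f s := rfl

@[simp] lemma splitEquiv_inr {r : ℕ} (f : Fin r → Fin n) (hf : Function.Injective f)
    (t : Fin (n - r)) : splitEquiv f hf (Sum.inr t) = compl f hf t := rfl

lemma count_compl {r : ℕ} (f : Fin r → Fin n) (hf : Function.Injective f) (x : Fin n) :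
    #(univ.filter fun s => f s ≤ x) + #(univ.filter fun t => compl f hf t ≤ x) = (x : ℕ) + 1 := by
  classical
  have h1 : #(univ.filter fun p : Fin r ⊕ Fin (n - r) => Sum.elim f (compl f hf) p ≤ x)
      = #(Finset.Iic x) := by
    apply Finset.card_bij (fun p _ => splitEquiv f hf p)
    · intro p hp
      simp only [Finset.mem_filter] at hp
      exact Finset.mem_Iic.mpr hp.2
    · intro p _ q _ h
      exact (splitEquiv f hf).injective h
    · intro y hy
      refine ⟨(splitEquiv f hf).symm y, ?_, by simp⟩
      simp only [Finset.mem_filter, Finset.mem_univ, true_and]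
      have : Sum.elim f (compl f hf) ((splitEquiv f hf).symm y)
          = splitEquiv f hf ((splitEquiv f hf).symm y) := rfl
      rw [this, Equiv.apply_symm_apply]
      simpa [Finset.mem_Iic] using hy
  have h2 : (univ.filter fun p : Fin r ⊕ Fin (n - r) => Sum.elim f (compl f hf) p ≤ x)
      = (univ.filter fun s => f s ≤ x).disjSum (univ.filter fun t => compl f hf t ≤ x) := by
    ext p
    cases p <;> simp
  rw [h2, Finset.card_disjSum] at h1
  rw [h1, Fin.card_Iic]

/-- If `J s ≤ I s` pointwise for strictly monotone `I J`, then the complements satisfy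
`Iᶜ t ≤ Jᶜ t`. -/
lemma compl_le_compl {r : ℕ} (I J : Fin r → Fin n) (hI : StrictMono I) (hJ : StrictMono J)
    (hJI : ∀ s, J s ≤ I s) (t : Fin (n - r)) :
    compl I hI.injective t ≤ compl J hJ.injective t := by
  classical
  by_contra hlt
  push_neg at hlt
  set x := compl J hJ.injective t with hx
  have h1 := count_compl I hI.injective x
  have h2 := count_compl J hJ.injective x
  have h3 : #(univ.filter fun s => I s ≤ x) ≤ #(univ.filter fun s => J s ≤ x) := by
    apply Finset.card_le_card
    intro s hs
    simp only [Finset.mem_filter, Finset.mem_univ, true_and] at hs ⊢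
    exact le_trans (hJI s) hs
  have h4 : (t : ℕ) + 1 ≤ #(univ.filter fun u => compl J hJ.injective u ≤ x) := by
    have : Finset.Iic t ⊆ univ.filter fun u => compl J hJ.injective u ≤ x := by
      intro u hu
      simp only [Finset.mem_Iic] at hu
      simp only [Finset.mem_filter, Finset.mem_univ, true_and]
      exact (compl_strictMono J hJ.injective).monotone hu
    simpa [Fin.card_Iic] using Finset.card_le_card this
  have h5 : #(univ.filter fun u => compl I hI.injective u ≤ x) ≤ (t : ℕ) := by
    have : (univ.filter fun u => compl I hI.injective u ≤ x) ⊆ Finset.Iio t := by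
      intro u hu
      simp only [Finset.mem_filter, Finset.mem_univ, true_and] at hu
      simp only [Finset.mem_Iio]
      by_contra hut
      push_neg at hut
      exact absurd (le_trans ((compl_strictMono I hI.injective).monotone hut) hu)
        (not_le.mpr hlt)
    simpa [Fin.card_Iio] using Finset.card_le_card this
  omega


open Matrix in
/-- Jacobi-style nonvanishing transfer: a minor of `A⁻¹` is nonzero provided the
complementary minor of `A` is nonzero. -/
lemma det_submatrix_inv_ne_zero {F : Type*} [Field F] {r : ℕ}
    {A : Matrix (Fin n) (Fin n) F} (hdet : A.det ≠ 0)
    (I J : Fin r → Fin n) (hI : Function.Injective I) (hJ : Function.Injective J)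
    (h : (A.submatrix (compl J hJ) (compl I hI)).det ≠ 0) :
    ((A⁻¹).submatrix I J).det ≠ 0 := by
  classical
  set B := A⁻¹ with hB
  have hAB : A * B = 1 := Matrix.mul_nonsing_inv A (isUnit_iff_ne_zero.mpr hdet)
  set Ic := compl I hI with hIc
  set Jc := compl J hJ with hJc
  set eI := splitEquiv I hI with heI
  set eJ := splitEquiv J hJ with heJ
  set M : Matrix (Fin n) (Fin n) F :=
    fun k j => Sum.elim (fun s => B k (J s)) (fun t => if k = Ic t then 1 else 0) (eI.symm j)
      with hM
  set C : Matrix (Fin n) (Fin n) F :=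
    fun k j => Sum.elim (fun s => if k = J s then 1 else 0) (fun t => A k (Ic t)) (eI.symm j)
      with hC
  -- Step 1 : A * M = C
  have step1 : A * M = C := by
    ext k j
    rw [Matrix.mul_apply]
    rcases hp : eI.symm j with s | t
    · simp only [hM, hC, hp, Sum.elim_inl]
      have : ∑ l, A k l * B l (J s) = (A * B) k (J s) := (Matrix.mul_apply).symm
      rw [this, hAB, Matrix.one_apply]
    · have hj : j = Ic t := by
        have := congrArg eI hp
        rw [Equiv.apply_symm_apply] at this
        exact this
      simp only [hM, hC, hp, Sum.elim_inr, mul_ite, mul_one, mul_zero]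
      rw [Finset.sum_ite_eq' Finset.univ (Ic t) (fun l => A k l)]
      simp [hj]
  -- Step 2 : det M = det (B.submatrix I J)
  have hMsub : M.submatrix eI eI =
      Matrix.fromBlocks (B.submatrix I J) 0 (B.submatrix Ic J) 1 := by
    ext p q
    rcases p with u | u <;> rcases q with s | t <;>
      simp only [Matrix.submatrix_apply] <;> simp only [hM, Equiv.symm_apply_apply, Sum.elim_inl, Sum.elim_inr,
        Matrix.fromBlocks_apply₁₁, Matrix.fromBlocks_apply₁₂, Matrix.fromBlocks_apply₂₁,
        Matrix.fromBlocks_apply₂₂]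
    · rfl
    · rw [if_neg]
      · rfl
      · exact compl_ne I hI u t
    · rfl
    · rw [Matrix.one_apply]
      by_cases hut : u = t
      · simp [hut, show eI (Sum.inr t) = Ic t from rfl]
      · rw [if_neg, if_neg hut]
        exact fun hc => hut ((compl_strictMono I hI).injective hc)
  have step2 : M.det = (B.submatrix I J).det := by
    rw [← Matrix.det_submatrix_equiv_self eI M, hMsub,
      Matrix.det_fromBlocks_zero₁₂, Matrix.det_one, mul_one]
  -- Step 3 : det C = ± det (A.submatrix Jc Ic)
  have hCsub : C.submatrix eJ eI =
      Matrix.fromBlocks 1 (A.submatrix J Ic) 0 (A.submatrix Jc Ic) := by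
    ext p q
    rcases p with u | u <;> rcases q with s | t <;>
      simp only [Matrix.submatrix_apply] <;> simp only [hC, Equiv.symm_apply_apply, Sum.elim_inl, Sum.elim_inr,
        Matrix.fromBlocks_apply₁₁, Matrix.fromBlocks_apply₁₂, Matrix.fromBlocks_apply₂₁,
        Matrix.fromBlocks_apply₂₂]
    · rw [Matrix.one_apply]
      by_cases hus : u = s
      · simp [hus, show eJ (Sum.inl s) = J s from rfl]
      · rw [if_neg, if_neg hus]
        exact fun hc => hus (hJ hc)
    · rfl
    · rw [if_neg]
      · rfl
      · exact fun hc => compl_ne J hJ s u hc.symm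
    · rfl
  have hdetCsub : (C.submatrix eJ eI).det = (A.submatrix Jc Ic).det := by
    rw [hCsub, Matrix.det_fromBlocks_zero₂₁, Matrix.det_one, one_mul]
  have hCperm : C.submatrix (⇑eJ) (⇑eI) = (C.submatrix eJ eJ).submatrix id (⇑(eI.trans eJ.symm))
      := by
    rw [Matrix.submatrix_submatrix]
    congr 1
    ext q
    simp
  have step3 : ((Equiv.Perm.sign (eI.trans eJ.symm) : ℤ) : F) * C.det = (A.submatrix Jc Ic).det := by
    rw [← hdetCsub, hCperm, Matrix.det_permute',
      Matrix.det_submatrix_equiv_self]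
  have hsign : ((Equiv.Perm.sign (eI.trans eJ.symm) : ℤ) : F) ≠ 0 := by
    rcases Int.units_eq_one_or (Equiv.Perm.sign (eI.trans eJ.symm)) with hs | hs <;> simp [hs]
  have hCdet : C.det ≠ 0 := by
    intro hc
    rw [hc, mul_zero] at step3
    exact h step3.symm
  have : A.det * M.det ≠ 0 := by
    rw [← Matrix.det_mul, step1]; exact hCdet
  rw [← step2]
  exact fun hm => this (by rw [hm, mul_zero])


end TNSAux

/-- If a lower-triangular matrix over a field is totally non-singular, then it is invertible,
and its inverse is again lower-triangular and totally non-singular. -/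
theorem inverse_totally_nonsingular {F : Type*} [Field F] {n : ℕ}
    (A : Matrix (Fin n) (Fin n) F)
    (hlow : ∀ i j : Fin n, i < j → A i j = 0)
    (htns : TotallyNonSingular A) :
    IsUnit A ∧ (∀ i j : Fin n, i < j → A⁻¹ i j = 0) ∧ TotallyNonSingular A⁻¹ := by
  have hdet : A.det ≠ 0 := by
    have := htns n id id strictMono_id strictMono_id (fun s => le_refl _)
    simpa using this
  have hu : IsUnit A := (Matrix.isUnit_iff_isUnit_det A).mpr (isUnit_iff_ne_zero.mpr hdet)
  haveI := A.invertibleOfIsUnitDet (isUnit_iff_ne_zero.mpr hdet)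
  have hlow' : Matrix.BlockTriangular A (OrderDual.toDual : Fin n → (Fin n)ᵒᵈ) := by
    intro i j hij
    exact hlow i j hij
  have hinv := Matrix.blockTriangular_inv_of_blockTriangular hlow'
  refine ⟨hu, fun i j hij => hinv ?_, ?_⟩
  · exact hij
  · intro r I J hI hJ hle
    exact TNSAux.det_submatrix_inv_ne_zero hdet I J hI.injective hJ.injective
      (htns (n - r) (TNSAux.compl J hJ.injective) (TNSAux.compl I hI.injective)
        (TNSAux.compl_strictMono _ _) (TNSAux.compl_strictMono _ _)
        (fun t => TNSAux.compl_le_compl I J hI hJ hle t))
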